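/- For the BB84 protocol over a depolarizing channel with fidelity F, disturbance D = 1 − F, overall transmission η, and no-dark-count probability p̄_d per detector: the probability of a wrong outcome after randomly assigning double clicks satisfies Y_n Q_n = (1/2) Σ_{k=0}^n C(n,k) F^k D^{n−k} [ p̄_d(1−η)^k (1 − p̄_d(1−η)^{n−k}) + (1/2)(1 − p̄_d(1−η)^k)(1 − p̄_d(1−η)^{n−k}) ] = (1/4)[ 1 + p̄_d(1 − Fη)^n − p̄_d(1 − Dη)^n − p̄_d²(1 − η)^n ]. -/
import Mathlib

lemma binom_aux (n : ℕ) (F D a b : ℝ) :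
    ∑ k ∈ Finset.range (n + 1),
      (n.choose k : ℝ) * (F ^ k * a ^ k) * (D ^ (n - k) * b ^ (n - k))
    = (F * a + D * b) ^ n := by
  rw [add_pow]
  exact Finset.sum_congr rfl fun k _ => by rw [mul_pow, mul_pow]; ring

/-- BB84 over a depolarizing channel: binomial-sum identity for the wrong-outcome
probability `Y_n Q_n` with fidelity `F`, disturbance `D = 1 − F`, transmission `η`,
and no-dark-count probability `p̄_d` per detector. -/
theorem bb84_wrong_outcome_binomial_identity
    (n : ℕ) (F D η pd : ℝ) (hFD : F + D = 1) :
    (1 / 2 : ℝ) * ∑ k ∈ Finset.range (n + 1),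
        (n.choose k : ℝ) * F ^ k * D ^ (n - k) *
          (pd * (1 - η) ^ k * (1 - pd * (1 - η) ^ (n - k))
            + (1 / 2) * (1 - pd * (1 - η) ^ k) * (1 - pd * (1 - η) ^ (n - k)))
    = (1 / 4) * (1 + pd * (1 - F * η) ^ n - pd * (1 - D * η) ^ n
        - pd ^ 2 * (1 - η) ^ n) := by
  have hsum : ∑ k ∈ Finset.range (n + 1),
      (n.choose k : ℝ) * F ^ k * D ^ (n - k) *
        (pd * (1 - η) ^ k * (1 - pd * (1 - η) ^ (n - k))
          + (1 / 2) * (1 - pd * (1 - η) ^ k) * (1 - pd * (1 - η) ^ (n - k)))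
    = (1/2) * ∑ k ∈ Finset.range (n + 1),
        (n.choose k : ℝ) * (F ^ k * (1:ℝ) ^ k) * (D ^ (n - k) * (1:ℝ) ^ (n - k))
      + (1/2) * pd * ∑ k ∈ Finset.range (n + 1),
        (n.choose k : ℝ) * (F ^ k * (1 - η) ^ k) * (D ^ (n - k) * (1:ℝ) ^ (n - k))
      - (1/2) * pd * ∑ k ∈ Finset.range (n + 1),
        (n.choose k : ℝ) * (F ^ k * (1:ℝ) ^ k) * (D ^ (n - k) * (1 - η) ^ (n - k))
      - (1/2) * pd ^ 2 * ∑ k ∈ Finset.range (n + 1),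
        (n.choose k : ℝ) * (F ^ k * (1 - η) ^ k) * (D ^ (n - k) * (1 - η) ^ (n - k)) := by
    rw [Finset.mul_sum, Finset.mul_sum, Finset.mul_sum, Finset.mul_sum,
      ← Finset.sum_add_distrib, ← Finset.sum_sub_distrib, ← Finset.sum_sub_distrib]
    exact Finset.sum_congr rfl fun k _ => by ring
  rw [hsum, binom_aux, binom_aux, binom_aux, binom_aux]
  have h1 : F * 1 + D * 1 = 1 := by linarith
  have h2 : F * (1 - η) + D * 1 = 1 - F * η := by ring_nf; linarith
  have h3 : F * 1 + D * (1 - η) = 1 - D * η := by ring_nf; linarith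
  have h4 : F * (1 - η) + D * (1 - η) = 1 - η := by
    rw [← add_mul, hFD, one_mul]
  rw [h1, h2, h3, h4, one_pow]
  ring
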